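/- Let V(ξ) = Σ_{i=1}^{n−1} kᵢ φᵢ(ξ)². Let r > 0 and let α > 0 be such that V(p) > α for every p ∈ ℝⁿ with ‖p‖ = r. Set Ω_α = {ξ ∈ ℝⁿ : ‖ξ‖ < r and V(ξ) ≤ α}. Then Ω_α is positively invariant: every differentiable ξ : [0,∞) → ℝⁿ with ξ′(t) = χ(ξ(t)) for all t ≥ 0 and ξ(0) ∈ Ω_α satisfies ξ(t) ∈ Ω_α for all t ≥ 0. -/

import Mathlib

open scoped RealInnerProductSpace

theorem stmt5 (n : ℕ) (hn : 2 ≤ n)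
    (k : Fin (n - 1) → ℝ) (hk : ∀ i, 0 < k i)
    (φ : Fin (n - 1) → EuclideanSpace ℝ (Fin n) → ℝ)
    (hφ : ∀ i, ContDiff ℝ 1 (φ i))
    (bot : EuclideanSpace ℝ (Fin n) → EuclideanSpace ℝ (Fin n))
    (hbot : ∀ ξ u : EuclideanSpace ℝ (Fin n),
      ⟪bot ξ, u⟫ = Matrix.det (Matrix.of (fun (i j : Fin n) =>
        if h : (j : ℕ) < n - 1 then gradient (φ ⟨j, h⟩) ξ i else u i)))
    (χ : EuclideanSpace ℝ (Fin n) → EuclideanSpace ℝ (Fin n))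
    (hχ : ∀ ξ, χ ξ = bot ξ - ∑ i, (k i * φ i ξ) • gradient (φ i) ξ)
    (V : EuclideanSpace ℝ (Fin n) → ℝ)
    (hV : ∀ ξ, V ξ = ∑ i, k i * φ i ξ ^ 2)
    (r α : ℝ) (hr : 0 < r) (hα : 0 < α)
    (hαr : ∀ p : EuclideanSpace ℝ (Fin n), ‖p‖ = r → α < V p)
    (Ω : Set (EuclideanSpace ℝ (Fin n)))
    (hΩ : Ω = {ξ | ‖ξ‖ < r ∧ V ξ ≤ α}) :
    ∀ ξ : ℝ → EuclideanSpace ℝ (Fin n),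
      (∀ t : ℝ, 0 ≤ t → HasDerivAt ξ (χ (ξ t)) t) →
      ξ 0 ∈ Ω → ∀ t : ℝ, 0 ≤ t → ξ t ∈ Ω := by
  intro ξ hξ h0 t ht
  have hn1 : n - 1 < n := Nat.sub_lt (by omega) one_pos
  -- gradients are orthogonal to bot
  have hbotg : ∀ (p : EuclideanSpace ℝ (Fin n)) (i : Fin (n - 1)),
      ⟪bot p, gradient (φ i) p⟫ = 0 := by
    intro p i
    rw [hbot]
    refine Matrix.det_zero_of_column_eq (i := ⟨i.1, i.2.trans hn1⟩) (j := ⟨n - 1, hn1⟩)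
      ?_ ?_
    · intro h
      have := congrArg Fin.val h
      simp only at this
      omega
    · intro m
      simp only [Matrix.of_apply]
      rw [dif_pos i.2, dif_neg (lt_irrefl _)]
  -- D: the derivative of V ∘ ξ
  set s : EuclideanSpace ℝ (Fin n) → EuclideanSpace ℝ (Fin n) :=
    fun p => ∑ i, (k i * φ i p) • gradient (φ i) p with hs
  have hinner : ∀ (p : EuclideanSpace ℝ (Fin n)) (i : Fin (n - 1)),
      ⟪gradient (φ i) p, χ p⟫ = -⟪gradient (φ i) p, s p⟫ := by
    intro p i
    rw [hχ, inner_sub_right, real_inner_comm, hbotg]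
    simp only [hs]
    ring
  have keyD : ∀ p : EuclideanSpace ℝ (Fin n),
      (∑ i, k i * (2 * φ i p * ⟪gradient (φ i) p, χ p⟫)) ≤ 0 := by
    intro p
    have : (∑ i, k i * (2 * φ i p * ⟪gradient (φ i) p, χ p⟫))
        = -2 * ∑ i, ⟪(k i * φ i p) • gradient (φ i) p, s p⟫ := by
      rw [Finset.mul_sum]
      refine Finset.sum_congr rfl fun i _ => ?_
      rw [hinner, real_inner_smul_left]
      ring
    rw [this, ← sum_inner]
    simp only [hs]
    have : (0 : ℝ) ≤ ⟪s p, s p⟫ := real_inner_self_nonneg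
    nlinarith
  -- derivative of V ∘ ξ at each t ≥ 0
  have hVd : ∀ u : ℝ, 0 ≤ u → HasDerivAt (fun v => V (ξ v))
      (∑ i, k i * (2 * φ i (ξ u) * ⟪gradient (φ i) (ξ u), χ (ξ u)⟫)) u := by
    intro u hu
    have : (fun v => V (ξ v)) = fun v => ∑ i, k i * φ i (ξ v) ^ 2 := by
      funext v; rw [hV]
    rw [this]
    refine HasDerivAt.fun_sum fun i _ => ?_
    have hdiff : DifferentiableAt ℝ (φ i) (ξ u) := (hφ i).differentiable one_ne_zero (ξ u)
    have hgrad := hdiff.hasGradientAt.hasFDerivAt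
    have hcomp : HasDerivAt (fun v => φ i (ξ v))
        (⟪gradient (φ i) (ξ u), χ (ξ u)⟫) u := by
      have := hgrad.comp_hasDerivAt u (hξ u hu)
      simp [InnerProductSpace.toDual_apply_apply] at this ⊢
      exact this
    have := (hcomp.pow 2).const_mul (k i)
    simpa [mul_comm, mul_assoc, mul_left_comm] using this
  -- V ∘ ξ is antitone on [0, ∞)
  have hanti : AntitoneOn (fun v => V (ξ v)) (Set.Ici 0) := by
    refine antitoneOn_of_deriv_nonpos (convex_Ici 0) ?_ ?_ ?_
    · intro u hu
      exact ((hVd u hu).continuousAt).continuousWithinAt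
    · intro u hu
      rw [interior_Ici] at hu
      exact ((hVd u (le_of_lt hu)).differentiableAt).differentiableWithinAt
    · intro u hu
      rw [interior_Ici] at hu
      rw [(hVd u (le_of_lt hu)).deriv]
      exact keyD (ξ u)
  rw [hΩ] at h0 ⊢
  obtain ⟨h0r, h0V⟩ := h0
  have hVle : ∀ u : ℝ, 0 ≤ u → V (ξ u) ≤ α := fun u hu =>
    le_trans (hanti (Set.self_mem_Ici) hu hu) h0V
  refine ⟨?_, hVle t ht⟩
  -- the norm stays below r
  by_contra hc
  push_neg at hc
  have hcont : ContinuousOn (fun u => ‖ξ u‖) (Set.Icc 0 t) := by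
    intro u hu
    exact (((hξ u hu.1).continuousAt).norm).continuousWithinAt
  have hmem : r ∈ Set.Icc ‖ξ 0‖ ‖ξ t‖ := ⟨le_of_lt h0r, hc⟩
  obtain ⟨u, hu, hur⟩ := intermediate_value_Icc ht hcont hmem
  have := hαr (ξ u) hur
  have := hVle u hu.1
  linarith
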